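/- Let p ≥ 3 be a prime, u ∈ {1,…,p−1}, and let n ≥ p be an integer of the form n = n''·p^{s+1} + k·p^s + j for some n'' ∈ ℕ, k ∈ {1,…,p−1}, s ∈ ℕ₊ and j ∈ {0,…,p−1}. Then ν_p( ∑_{i=0}^{u} (−1)^i · C(u,i) · D_p(n−i) ) = ν_p( (p−k)·C(p+u−1, j) + k·C(p+u−1, p+j) ). -/

import Mathlib

open Polynomial Finset

/-- The number of digits equal to `i` in the base-`p` representation of `n`. -/
def Np (p i n : ℕ) : ℕ := (Nat.digits p n).count i

/-- `Dcoef p r n` is the coefficient of `x^n` in `∏_{i=0}^∞ (1 - x^{p^i})^r`.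
Since `p ≥ 2`, the factors with index `i > n` do not affect the coefficient of `x^n`,
so the product may be truncated at `i = n`. -/
noncomputable def Dcoef (p r n : ℕ) : ℤ :=
  PowerSeries.coeff (R := ℤ) n (∏ i ∈ Finset.range (n + 1), (1 - PowerSeries.X ^ p ^ i) ^ r)

/-- `Dp p n = D_{p,p-1}(n)`. -/
noncomputable def Dp (p n : ℕ) : ℤ := Dcoef p (p - 1) n

/-- `Acoef m k n` is the coefficient of `x^n` in `∏_{i=0}^∞ (1 - x^{m^i})^{-k}`,
the number of `k`-colored `m`-ary partitions of `n`.  Here `(1 - X^{m^i})⁻¹` is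
realized as `PowerSeries.invOfUnit (1 - X ^ m ^ i) 1`, and since `m ≥ 2` the factors
with index `i > n` do not affect the coefficient of `x^n`. -/
noncomputable def Acoef (m k n : ℕ) : ℤ :=
  PowerSeries.coeff (R := ℤ) n
    (∏ i ∈ Finset.range (n + 1),
      (PowerSeries.invOfUnit (1 - PowerSeries.X ^ m ^ i) 1) ^ k)


noncomputable def Qp (p r N : ℕ) : Polynomial ℤ :=
  ∏ i ∈ Finset.range N, (1 - Polynomial.X ^ p ^ i) ^ r

lemma coeff_one_sub_X_pow (r m : ℕ) :
    (((1 : Polynomial ℤ) - X) ^ r).coeff m = (-1) ^ m * (r.choose m : ℤ) := by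
  have h : ((1 : Polynomial ℤ) - X) ^ r = ∑ k ∈ range (r + 1),
      C ((-1) ^ k * (r.choose k : ℤ)) * X ^ k := by
    rw [sub_eq_neg_add, add_pow]
    refine Finset.sum_congr rfl fun k _ => ?_
    rw [neg_pow]
    simp only [Polynomial.C_mul, Polynomial.C_pow, map_neg, map_one, Polynomial.C_eq_natCast]
    ring
  rw [h, Polynomial.finset_sum_coeff]
  simp only [Polynomial.coeff_C_mul, Polynomial.coeff_X_pow]
  rw [Finset.sum_congr rfl (fun k _ => by rw [mul_ite, mul_one, mul_zero]),
    Finset.sum_ite_eq (range (r + 1)) m]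
  by_cases hm : m ∈ range (r + 1)
  · simp [hm]
  · simp only [hm, if_false]
    rw [Nat.choose_eq_zero_of_lt (by simpa using Nat.lt_of_succ_le (not_lt.mp (by simpa using hm)))]
    · simp

lemma one_sub_X_pow_eq_expand (m r : ℕ) :
    ((1 : Polynomial ℤ) - X ^ m) ^ r = expand ℤ m (((1 : Polynomial ℤ) - X) ^ r) := by
  rw [map_pow, map_sub, map_one, expand_X]

lemma coeff_one_sub_X_pow_pow (m r t : ℕ) (hm : 0 < m) :
    (((1 : Polynomial ℤ) - X ^ m) ^ r).coeff t =
      if m ∣ t then (-1) ^ (t / m) * (r.choose (t / m) : ℤ) else 0 := by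
  rw [one_sub_X_pow_eq_expand, Polynomial.coeff_expand hm]
  split <;> simp [coeff_one_sub_X_pow]

lemma Qp_succ (p r N : ℕ) :
    Qp p r (N + 1) = ((1 : Polynomial ℤ) - X) ^ r * expand ℤ p (Qp p r N) := by
  unfold Qp
  rw [Finset.prod_range_succ', pow_zero, pow_one, mul_comm, map_prod]
  refine congrArg _ (Finset.prod_congr rfl fun i _ => ?_)
  rw [map_pow, map_sub, map_one, map_pow, expand_X, ← pow_mul, ← pow_succ']

lemma coeff_mul_eq_sum_range (f g : Polynomial ℤ) (n : ℕ) :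
    (f * g).coeff n = ∑ a ∈ range (n + 1), f.coeff a * g.coeff (n - a) := by
  rw [Polynomial.coeff_mul, Finset.Nat.sum_antidiagonal_eq_sum_range_succ_mk]

lemma coeff_Qp_stable (p r n N : ℕ) (hp : 2 ≤ p) (hN : n < N) :
    (Qp p r N).coeff n = (Qp p r (n + 1)).coeff n := by
  induction N with
  | zero => omega
  | succ N ih =>
    rcases Nat.lt_or_ge n N with h | h
    · rw [← ih h]
      unfold Qp
      rw [Finset.prod_range_succ, coeff_mul_eq_sum_range]
      have hpN : n < p ^ N := lt_of_lt_of_le h (Nat.le_of_lt (Nat.lt_pow_self (n := N) hp))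
      rw [Finset.sum_eq_single n]
      · rw [Nat.sub_self, coeff_one_sub_X_pow_pow _ _ _ (by positivity)]
        simp
      · intro a ha hne
        rw [coeff_one_sub_X_pow_pow _ _ _ (by positivity), if_neg, mul_zero]
        rintro ⟨c, hc⟩
        have h1 : n - a ≤ n := Nat.sub_le _ _
        have h2 : n - a ≠ 0 := by
          simp only [mem_range] at ha; omega
        have : p ^ N ≤ n - a := by
          rcases c with _ | c
          · omega
          · calc p ^ N ≤ p ^ N * (c+1) := by nlinarith [pow_pos (by omega : 0 < p) N]
            _ = n - a := hc.symm
        omega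
      · intro h; simp at h
    · have : N = n := by omega
      subst this; rfl

lemma Dcoef_eq_Qp (p r n N : ℕ) (hp : 2 ≤ p) (hN : n < N) :
    Dcoef p r n = (Qp p r N).coeff n := by
  rw [coeff_Qp_stable p r n N hp hN]
  unfold Dcoef Qp
  rw [show (∏ i ∈ Finset.range (n + 1), ((1 : PowerSeries ℤ) - PowerSeries.X ^ p ^ i) ^ r)
      = ((∏ i ∈ Finset.range (n + 1), ((1 : Polynomial ℤ) - X ^ p ^ i) ^ r : Polynomial ℤ) :
        PowerSeries ℤ) by
    rw [← Polynomial.coeToPowerSeries.ringHom_apply,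
      map_prod (Polynomial.coeToPowerSeries.ringHom (R := ℤ))]
    refine Finset.prod_congr rfl fun i _ => ?_
    simp [Polynomial.coeToPowerSeries.ringHom_apply]]
  rw [Polynomial.coeff_coe]

lemma coeff_mul_expand_small (p r : ℕ) (f : Polynomial ℤ) (n : ℕ) (hp : 0 < p) (hr : r < p) :
    (((1 : Polynomial ℤ) - X) ^ r * expand ℤ p f).coeff n =
      (-1) ^ (n % p) * (r.choose (n % p) : ℤ) * f.coeff (n / p) := by
  rw [coeff_mul_eq_sum_range]
  have hsub : n - n % p = p * (n / p) := by
    have h := Nat.div_add_mod n p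
    omega
  rw [Finset.sum_eq_single (n % p)]
  · rw [coeff_one_sub_X_pow, Polynomial.coeff_expand hp, hsub,
      if_pos (Dvd.intro _ rfl), Nat.mul_div_cancel_left _ hp]
  · intro a ha hne
    rw [coeff_one_sub_X_pow, Polynomial.coeff_expand hp]
    simp only [Finset.mem_range] at ha
    by_cases hd : p ∣ n - a
    · have hmod : a % p = n % p := (Nat.modEq_iff_dvd' (by omega)).2 hd
      have hpa : p ≤ a := by
        by_contra hlt
        push_neg at hlt
        rw [Nat.mod_eq_of_lt hlt] at hmod
        exact hne hmod
      rw [Nat.choose_eq_zero_of_lt (by omega)]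
      simp
    · rw [if_neg hd, mul_zero]
  · intro h
    exact absurd (Finset.mem_range.mpr (Nat.lt_succ_of_le (Nat.mod_le n p))) h

lemma Dcoef_rec (p r m : ℕ) (hp : 2 ≤ p) (hr : r < p) :
    Dcoef p r m = (-1) ^ (m % p) * (r.choose (m % p) : ℤ) * Dcoef p r (m / p) := by
  rcases Nat.eq_zero_or_pos m with hm | hm
  · subst hm
    simp
  · rw [Dcoef_eq_Qp p r m (m + 1) hp (Nat.lt_succ_self m), Qp_succ,
      coeff_mul_expand_small p r _ m (by omega) hr,
      ← Dcoef_eq_Qp p r (m / p) m hp (Nat.div_lt_self hm (by omega))]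

lemma Dcoef_rec' (p r a j : ℕ) (hp : 2 ≤ p) (hr : r < p) (hj : j < p) :
    Dcoef p r (a * p + j) = (-1) ^ j * (r.choose j : ℤ) * Dcoef p r a := by
  have h1 : (a * p + j) % p = j := by
    rw [add_comm, Nat.add_mul_mod_self_right, Nat.mod_eq_of_lt hj]
  have h2 : (a * p + j) / p = a := by
    rw [add_comm, Nat.add_mul_div_right _ _ (by omega : 0 < p), Nat.div_eq_of_lt hj, zero_add]
  rw [Dcoef_rec p r _ hp hr, h1, h2]

lemma Dcoef_zero (p r : ℕ) : Dcoef p r 0 = 1 := by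
  simp [Dcoef, PowerSeries.coeff_zero_eq_constantCoeff]

lemma prime_not_dvd_choose_pred (p : ℕ) (hp : p.Prime) (j : ℕ) (hj : j ≤ p - 1) :
    ¬ (p : ℤ) ∣ ((p - 1).choose j : ℤ) := by
  rw [Int.natCast_dvd_natCast]
  intro h
  have h2 : p ∣ (p - 1).factorial := by
    have := Nat.choose_mul_factorial_mul_factorial hj
    exact this ▸ Dvd.dvd.mul_right (h.mul_right _) _
  rw [hp.dvd_factorial] at h2
  have := hp.two_le
  omega

lemma Dp_unit (p : ℕ) (hp : p.Prime) : ∀ m, ¬ (p : ℤ) ∣ Dp p m := by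
  have hp2 : 2 ≤ p := hp.two_le
  intro m
  induction m using Nat.strong_induction_on with
  | _ m ih =>
    rcases Nat.eq_zero_or_pos m with hm | hm
    · subst hm
      rw [Dp, Dcoef_zero]
      intro h
      have h1 : (p : ℤ) = 1 := Int.eq_one_of_dvd_one (by positivity) h
      have : p = 1 := by exact_mod_cast h1
      omega
    · rw [Dp, Dcoef_rec p (p - 1) m hp2 (by omega)]
      intro hdvd
      rcases (Nat.prime_iff_prime_int.mp hp).dvd_mul.mp hdvd with h | h
      · rcases (Nat.prime_iff_prime_int.mp hp).dvd_mul.mp h with h | h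
        · exact (Nat.prime_iff_prime_int.mp hp).not_unit
            (isUnit_of_dvd_unit h ((isUnit_one.neg).pow _))
        · exact prime_not_dvd_choose_pred p hp _ (by
            have := Nat.mod_lt m (show 0 < p by omega); omega) h
      · exact ih (m / p) (Nat.div_lt_self hm (by omega)) h

lemma Dp_form (p : ℕ) (hp : p.Prime) (hp3 : 3 ≤ p) (a k : ℕ) (hk1 : 1 ≤ k) (hk2 : k ≤ p - 1) :
    ∀ t : ℕ, Dp p (a * p ^ (t + 1) + k * p ^ t) =
        (-1) ^ k * (((p - 1).choose k : ℤ)) * Dp p a ∧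
      Dp p (a * p ^ (t + 1) + k * p ^ t - 1) =
        (-1) ^ (k - 1) * (((p - 1).choose (k - 1) : ℤ)) * Dp p a := by
  have hp2 : 2 ≤ p := hp.two_le
  have hodd : Odd p := hp.odd_of_ne_two (by omega)
  intro t
  induction t with
  | zero =>
    constructor
    · have h : a * p ^ (0 + 1) + k * p ^ 0 = a * p + k := by ring
      rw [h, Dp, Dcoef_rec' p (p - 1) a k hp2 (by omega) (by omega)]; rfl
    · have h : a * p ^ (0 + 1) + k * p ^ 0 - 1 = a * p + (k - 1) := by
        have h2 : a * p ^ (0 + 1) + k * p ^ 0 = a * p + k := by ring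
        omega
      rw [h, Dp, Dcoef_rec' p (p - 1) a (k - 1) hp2 (by omega) (by omega)]; rfl
  | succ t ih =>
    obtain ⟨ih1, ih2⟩ := ih
    have hpt : 1 ≤ p ^ t := Nat.one_le_pow _ _ (by omega)
    set m := a * p ^ (t + 1) + k * p ^ t with hm
    have hm1 : 1 ≤ m := by
      have h3 : 1 ≤ k * p ^ t := Nat.one_le_iff_ne_zero.mpr (by positivity)
      omega
    have hN : a * p ^ (t + 1 + 1) + k * p ^ (t + 1) = m * p + 0 := by rw [hm]; ring
    constructor
    · rw [hN, Dp, Dcoef_rec' p (p - 1) m 0 hp2 (by omega) (by omega)]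
      simpa [Dp] using ih1
    · obtain ⟨m', hm'⟩ : ∃ m', m = m' + 1 := ⟨m - 1, by omega⟩
      have hN1 : a * p ^ (t + 1 + 1) + k * p ^ (t + 1) - 1 = m' * p + (p - 1) := by
        have hN' : a * p ^ (t + 1 + 1) + k * p ^ (t + 1) = m' * p + p := by
          rw [hN, hm']; ring
        omega
      rw [hN1, Dp, Dcoef_rec' p (p - 1) m' (p - 1) hp2 (by omega) (by omega)]
      have hsign : ((-1 : ℤ)) ^ (p - 1) = 1 := Even.neg_one_pow (by
        rcases hodd with ⟨w, hw⟩
        exact ⟨w, by omega⟩)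
      rw [hsign, Nat.choose_self]
      have hmm : m' = m - 1 := by omega
      rw [hmm]
      simpa [Dp] using ih2

lemma coeff_mul_expand_two (p r : ℕ) (f : Polynomial ℤ) (n : ℕ) (hp : 0 < p) (hr : r < 2 * p)
    (hn : p + n % p ≤ n) :
    (((1 : Polynomial ℤ) - X) ^ r * expand ℤ p f).coeff n =
      (-1) ^ (n % p) * (r.choose (n % p) : ℤ) * f.coeff (n / p) +
        (-1) ^ (p + n % p) * (r.choose (p + n % p) : ℤ) * f.coeff (n / p - 1) := by
  have hd := Nat.div_add_mod n p
  set j := n % p with hj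
  set q := n / p with hq
  have hq1 : 1 ≤ q := by
    rcases Nat.eq_zero_or_pos q with h | h
    · rw [h, Nat.mul_zero] at hd
      omega
    · exact h
  obtain ⟨q', hq'⟩ : ∃ q', q = q' + 1 := ⟨q - 1, by omega⟩
  have hpq : p * q = p * q' + p := by rw [hq']; ring
  have hsubset : ({j, p + j} : Finset ℕ) ⊆ Finset.range (n + 1) := by
    intro x hx
    simp only [Finset.mem_insert, Finset.mem_singleton] at hx
    rcases hx with rfl | rfl <;> simp only [Finset.mem_range] <;> omega
  rw [coeff_mul_eq_sum_range, ← Finset.sum_subset hsubset ?_]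
  · rw [Finset.sum_insert (by simp only [Finset.mem_singleton]; omega), Finset.sum_singleton]
    congr 1
    · rw [coeff_one_sub_X_pow, Polynomial.coeff_expand hp,
        show n - j = p * q by omega, if_pos ⟨q, rfl⟩, Nat.mul_div_cancel_left _ hp]
    · rw [coeff_one_sub_X_pow, Polynomial.coeff_expand hp,
        show n - (p + j) = p * q' by omega, if_pos ⟨q', rfl⟩, Nat.mul_div_cancel_left _ hp,
        show q' = q - 1 by omega]
  · intro a ha hna
    simp only [Finset.mem_insert, Finset.mem_singleton, not_or] at hna
    simp only [Finset.mem_range] at ha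
    rw [coeff_one_sub_X_pow, Polynomial.coeff_expand hp]
    by_cases hdvd : p ∣ n - a
    · have hmod : a % p = j := (Nat.modEq_iff_dvd' (by omega)).2 hdvd
      have hple : ∀ x : ℕ, x % p = j → x ≠ j → p ≤ x := by
        intro x hx hne
        by_contra hlt
        push_neg at hlt
        rw [Nat.mod_eq_of_lt hlt] at hx
        exact hne hx
      have hpa : p ≤ a := hple a hmod hna.1
      obtain ⟨b, rfl⟩ : ∃ b, a = p + b := ⟨a - p, by omega⟩
      have hb : b % p = j := by rwa [Nat.add_mod_left] at hmod
      have hpb : p ≤ b := hple b hb (fun hbe => hna.2 (by omega))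
      rw [Nat.choose_eq_zero_of_lt (by omega)]
      simp
    · rw [if_neg hdvd, mul_zero]

lemma coeff_sub_pow_mul (u n : ℕ) (f : Polynomial ℤ) (hu : u ≤ n) :
    (((1 : Polynomial ℤ) - X) ^ u * f).coeff n =
      ∑ i ∈ Finset.range (u + 1), (-1) ^ i * (u.choose i : ℤ) * f.coeff (n - i) := by
  rw [coeff_mul_eq_sum_range, ← Finset.sum_subset (Finset.range_subset_range.mpr (show u + 1 ≤ n + 1 by omega)) ?_]
  · exact Finset.sum_congr rfl fun i _ => by rw [coeff_one_sub_X_pow]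
  · intro a ha hna
    simp only [Finset.mem_range] at ha hna
    rw [coeff_one_sub_X_pow, Nat.choose_eq_zero_of_lt (by omega)]
    simp

theorem stmt3 (p u : ℕ) (hp : p.Prime) (hp3 : 3 ≤ p) (hu1 : 1 ≤ u) (hu2 : u ≤ p - 1)
    (n n'' k s j : ℕ) (hk1 : 1 ≤ k) (hk2 : k ≤ p - 1) (hs : 1 ≤ s) (hj : j ≤ p - 1)
    (hn : p ≤ n) (hform : n = n'' * p ^ (s + 1) + k * p ^ s + j) :
    emultiplicity (p : ℤ)
        (∑ i ∈ Finset.range (u + 1), (-1 : ℤ) ^ i * (u.choose i : ℤ) * Dp p (n - i)) =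
      emultiplicity (p : ℤ)
        (((p : ℤ) - (k : ℤ)) * ((p + u - 1).choose j : ℤ) +
          (k : ℤ) * ((p + u - 1).choose (p + j) : ℤ)) := by
  have hp2 : 2 ≤ p := hp.two_le
  have hpZ : Prime (p : ℤ) := Nat.prime_iff_prime_int.mp hp
  have hodd : Odd p := hp.odd_of_ne_two (by omega)
  obtain ⟨s', rfl⟩ : ∃ s', s = s' + 1 := ⟨s - 1, by omega⟩
  obtain ⟨k', rfl⟩ : ∃ k', k = k' + 1 := ⟨k - 1, by omega⟩
  set n' : ℕ := n'' * p ^ (s' + 1) + (k' + 1) * p ^ s' with hn'def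
  have hneq : n = n' * p + j := by rw [hform, hn'def]; ring
  have hps' : 1 ≤ p ^ s' := Nat.one_le_pow _ _ (by omega)
  have hn'1 : 1 ≤ n' := by
    have h1 : 1 ≤ (k' + 1) * p ^ s' := Nat.one_le_iff_ne_zero.mpr (by positivity)
    omega
  have hpn' : p ≤ n' * p := Nat.le_mul_of_pos_left p hn'1
  have hn'n : n' < n := by
    have h2 : n' * 2 ≤ n' * p := Nat.mul_le_mul_left n' hp2
    omega
  have hjn : n % p = j := by
    rw [hneq, add_comm, Nat.add_mul_mod_self_right, Nat.mod_eq_of_lt (by omega)]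
  have hdiv : n / p = n' := by
    rw [hneq, add_comm, Nat.add_mul_div_right _ _ (show 0 < p by omega),
      Nat.div_eq_of_lt (by omega), zero_add]
  have hstep1 : (∑ i ∈ Finset.range (u + 1), (-1 : ℤ) ^ i * (u.choose i : ℤ) * Dp p (n - i))
      = (((1 : Polynomial ℤ) - X) ^ u * Qp p (p - 1) (n + 1)).coeff n := by
    rw [coeff_sub_pow_mul u n _ (by omega)]
    refine Finset.sum_congr rfl fun i hi => ?_
    rw [show Dp p (n - i) = (Qp p (p - 1) (n + 1)).coeff (n - i) from
      Dcoef_eq_Qp p (p - 1) (n - i) (n + 1) hp2 (by omega)]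
  rw [hstep1, Qp_succ, ← mul_assoc, ← pow_add, show u + (p - 1) = p + u - 1 by omega,
    coeff_mul_expand_two p (p + u - 1) (Qp p (p - 1) n) n (by omega) (by omega) (by omega),
    hjn, hdiv,
    ← Dcoef_eq_Qp p (p - 1) n' n hp2 hn'n,
    ← Dcoef_eq_Qp p (p - 1) (n' - 1) n hp2 (by omega),
    show Dcoef p (p - 1) n' = Dp p n' from rfl,
    show Dcoef p (p - 1) (n' - 1) = Dp p (n' - 1) from rfl]
  obtain ⟨hD1, hD2⟩ := Dp_form p hp hp3 n'' (k' + 1) (by omega) hk2 s'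
  rw [← hn'def] at hD1 hD2
  rw [hD1, hD2]
  have hsum : (-1 : ℤ) ^ j * ((p + u - 1).choose j : ℤ) *
        ((-1) ^ (k' + 1) * (((p - 1).choose (k' + 1) : ℤ)) * Dp p n'') +
      (-1 : ℤ) ^ (p + j) * ((p + u - 1).choose (p + j) : ℤ) *
        ((-1) ^ (k' + 1 - 1) * (((p - 1).choose (k' + 1 - 1) : ℤ)) * Dp p n'')
      = (-((-1 : ℤ) ^ j * (-1) ^ k' * Dp p n'')) *
        ((((p - 1).choose (k' + 1) : ℤ)) * ((p + u - 1).choose j : ℤ) +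
          (((p - 1).choose k' : ℤ)) * ((p + u - 1).choose (p + j) : ℤ)) := by
    rw [pow_add (-1 : ℤ) p j, hodd.neg_one_pow, show k' + 1 - 1 = k' from rfl, pow_succ]
    ring
  have hu0 : ¬ (p : ℤ) ∣ (-((-1 : ℤ) ^ j * (-1) ^ k' * Dp p n'')) := by
    rw [dvd_neg]
    intro hdvd
    rcases hpZ.dvd_mul.mp hdvd with h | h
    · exact hpZ.not_unit (isUnit_of_dvd_unit h
        ((isUnit_one.neg.pow j).mul (isUnit_one.neg.pow k')))
    · exact Dp_unit p hp n'' h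
  rw [hsum, emultiplicity_mul hpZ, emultiplicity_eq_zero.2 hu0, zero_add]
  have hk0 : ¬ (p : ℤ) ∣ ((k' + 1 : ℕ) : ℤ) := by
    rw [Int.natCast_dvd_natCast]
    intro h
    have := Nat.le_of_dvd (by omega) h
    omega
  have hc0 : ¬ (p : ℤ) ∣ (((p - 1).choose k' : ℤ)) :=
    prime_not_dvd_choose_pred p hp k' (by omega)
  have hidZ : (((p - 1).choose (k' + 1) : ℤ)) * ((k' + 1 : ℕ) : ℤ)
      = (((p - 1).choose k' : ℤ)) * ((p : ℤ) - ((k' + 1 : ℕ) : ℤ)) := by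
    have h := Nat.choose_succ_right_eq (p - 1) k'
    have h2 := congrArg (fun x : ℕ => (x : ℤ)) h
    push_cast [Nat.cast_sub (show k' ≤ p - 1 by omega),
      Nat.cast_sub (show 1 ≤ p by omega)] at h2
    push_cast
    linear_combination h2
  have key : ((k' + 1 : ℕ) : ℤ) * ((((p - 1).choose (k' + 1) : ℤ)) * ((p + u - 1).choose j : ℤ) +
        (((p - 1).choose k' : ℤ)) * ((p + u - 1).choose (p + j) : ℤ))
      = (((p - 1).choose k' : ℤ)) *
        (((p : ℤ) - ((k' + 1 : ℕ) : ℤ)) * ((p + u - 1).choose j : ℤ) +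
          ((k' + 1 : ℕ) : ℤ) * ((p + u - 1).choose (p + j) : ℤ)) := by
    linear_combination ((p + u - 1).choose j : ℤ) * hidZ
  calc emultiplicity (p : ℤ) ((((p - 1).choose (k' + 1) : ℤ)) * ((p + u - 1).choose j : ℤ) +
        (((p - 1).choose k' : ℤ)) * ((p + u - 1).choose (p + j) : ℤ))
      = emultiplicity (p : ℤ) (((k' + 1 : ℕ) : ℤ) *
          ((((p - 1).choose (k' + 1) : ℤ)) * ((p + u - 1).choose j : ℤ) +
          (((p - 1).choose k' : ℤ)) * ((p + u - 1).choose (p + j) : ℤ))) := by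
        rw [emultiplicity_mul hpZ, emultiplicity_eq_zero.2 hk0, zero_add]
    _ = emultiplicity (p : ℤ) ((((p - 1).choose k' : ℤ)) *
          (((p : ℤ) - ((k' + 1 : ℕ) : ℤ)) * ((p + u - 1).choose j : ℤ) +
          ((k' + 1 : ℕ) : ℤ) * ((p + u - 1).choose (p + j) : ℤ))) := by rw [key]
    _ = emultiplicity (p : ℤ) (((p : ℤ) - ((k' + 1 : ℕ) : ℤ)) * ((p + u - 1).choose j : ℤ) +
          ((k' + 1 : ℕ) : ℤ) * ((p + u - 1).choose (p + j) : ℤ)) := by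
        rw [emultiplicity_mul hpZ, emultiplicity_eq_zero.2 hc0, zero_add]
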